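/- Fix real numbers a, b, c1, c2 and λ ∈ ℂ. Let q1(x,t) = c1·e^{i(ax+bt)} and q2(x,t) = c2·e^{i(ax+bt)}, and build from them the Lax matrices U(λ) = i·λ·J + Q and V(λ) = 2i·λ²·J + 2λ·Q + i·J·(Q² − Qₓ). Let Ω be the constant matrix with rows (−iλ − ia/2, c1, c2), (−c1, iλ + ia/2, 0), (−c2, 0, iλ + ia/2), and Λ the constant matrix with rows (−2iλ² + i(c1²+c2²) − ib/2, (2λ−a)c1, (2λ−a)c2), ((a−2λ)c1, 2iλ² − ic1² + ib/2, −ic1c2), ((a−2λ)c2, −ic1c2, 2iλ² − ic2² + ib/2). Let R(x,t) = diag(e^{i(ax+bt)/2}, e^{−i(ax+bt)/2}, e^{−i(ax+bt)/2}). If Φ : ℝ × ℝ → ℂ³ is differentiable and satisfies ∂Φ/∂x = Ω·Φ and ∂Φ/∂t = Λ·Φ, then Ψ := R·Φ satisfies the Lax pair equations ∂Ψ/∂x = U(λ)·Ψ and ∂Ψ/∂t = V(λ)·Ψ. -/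

import Mathlib

open Complex Matrix

noncomputable section

/-- The constant matrix `J = diag(−1, 1, 1)`. -/
def Jmat : Matrix (Fin 3) (Fin 3) ℂ := Matrix.diagonal ![-1, 1, 1]

/-- The plane-wave seed `q1(x,t) = c1·e^{i(ax+bt)}`. -/
def seed (c a b : ℝ) (p : ℝ × ℝ) : ℂ :=
  (c : ℂ) * Complex.exp (Complex.I * ((a : ℂ) * p.1 + (b : ℂ) * p.2))

/-- The potential matrix `Q` with rows `(0, q1, q2)`, `(−q1*, 0, 0)`, `(−q2*, 0, 0)`. -/
def Qmat (q1 q2 : ℝ × ℝ → ℂ) (p : ℝ × ℝ) : Matrix (Fin 3) (Fin 3) ℂ :=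
  !![0, q1 p, q2 p;
     -(starRingEnd ℂ) (q1 p), 0, 0;
     -(starRingEnd ℂ) (q2 p), 0, 0]

/-- `Qₓ`: the entrywise partial derivative of `Q` with respect to `x`. -/
def Qxmat (q1 q2 : ℝ × ℝ → ℂ) (p : ℝ × ℝ) : Matrix (Fin 3) (Fin 3) ℂ :=
  Matrix.of fun i j => deriv (fun x' => Qmat q1 q2 (x', p.2) i j) p.1

/-- `U(λ) = i·λ·J + Q`. -/
def Umat (q1 q2 : ℝ × ℝ → ℂ) (lam : ℂ) (p : ℝ × ℝ) : Matrix (Fin 3) (Fin 3) ℂ :=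
  (Complex.I * lam) • Jmat + Qmat q1 q2 p

/-- `V(λ) = 2i·λ²·J + 2λ·Q + i·J·(Q² − Qₓ)`. -/
def Vmat (q1 q2 : ℝ × ℝ → ℂ) (lam : ℂ) (p : ℝ × ℝ) : Matrix (Fin 3) (Fin 3) ℂ :=
  (2 * Complex.I * lam ^ 2) • Jmat + (2 * lam) • Qmat q1 q2 p
    + Complex.I • (Jmat * (Qmat q1 q2 p * Qmat q1 q2 p - Qxmat q1 q2 p))

/-- The constant matrix `Ω`. -/
def OmegaMat (a c1 c2 : ℝ) (lam : ℂ) : Matrix (Fin 3) (Fin 3) ℂ :=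
  !![-Complex.I * lam - Complex.I * (a : ℂ) / 2, (c1 : ℂ), (c2 : ℂ);
     -(c1 : ℂ), Complex.I * lam + Complex.I * (a : ℂ) / 2, 0;
     -(c2 : ℂ), 0, Complex.I * lam + Complex.I * (a : ℂ) / 2]

/-- The constant matrix `Λ`. -/
def LambdaMat (a b c1 c2 : ℝ) (lam : ℂ) : Matrix (Fin 3) (Fin 3) ℂ :=
  !![-2 * Complex.I * lam ^ 2 + Complex.I * ((c1 : ℂ) ^ 2 + (c2 : ℂ) ^ 2)
        - Complex.I * (b : ℂ) / 2,
      (2 * lam - (a : ℂ)) * (c1 : ℂ), (2 * lam - (a : ℂ)) * (c2 : ℂ);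
     ((a : ℂ) - 2 * lam) * (c1 : ℂ),
      2 * Complex.I * lam ^ 2 - Complex.I * (c1 : ℂ) ^ 2 + Complex.I * (b : ℂ) / 2,
      -Complex.I * (c1 : ℂ) * (c2 : ℂ);
     ((a : ℂ) - 2 * lam) * (c2 : ℂ), -Complex.I * (c1 : ℂ) * (c2 : ℂ),
      2 * Complex.I * lam ^ 2 - Complex.I * (c2 : ℂ) ^ 2 + Complex.I * (b : ℂ) / 2]

/-- The diagonal gauge matrix `R(x,t) = diag(e^{i(ax+bt)/2}, e^{−i(ax+bt)/2}, e^{−i(ax+bt)/2})`. -/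
def Rmat (a b : ℝ) (p : ℝ × ℝ) : Matrix (Fin 3) (Fin 3) ℂ :=
  Matrix.diagonal
    ![Complex.exp (Complex.I * ((a : ℂ) * p.1 + (b : ℂ) * p.2) / 2),
      Complex.exp (-(Complex.I * ((a : ℂ) * p.1 + (b : ℂ) * p.2)) / 2),
      Complex.exp (-(Complex.I * ((a : ℂ) * p.1 + (b : ℂ) * p.2)) / 2)]

lemma hasDerivAt_cexp_aff (k m : ℂ) (x : ℝ) :
    HasDerivAt (fun x' : ℝ => Complex.exp (k * x' + m)) (k * Complex.exp (k * x + m)) x := by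
  have h0 : HasDerivAt (fun x' : ℝ => (x' : ℂ)) 1 x := by
    simpa using (hasDerivAt_id x).ofReal_comp
  simpa [mul_comm] using (((h0.const_mul k).add_const m).cexp)

lemma hasDerivAt_mul_cexp (c k m : ℂ) (x : ℝ) :
    HasDerivAt (fun x' : ℝ => c * Complex.exp (k * x' + m)) (k * (c * Complex.exp (k * x + m))) x := by
  simpa [mul_comm, mul_left_comm, mul_assoc] using (hasDerivAt_cexp_aff k m x).const_mul c

lemma seed_hasDerivAt_x (c a b t x : ℝ) :
    HasDerivAt (fun x' => seed c a b (x', t)) (Complex.I * a * seed c a b (x, t)) x := by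
  have h := hasDerivAt_mul_cexp (c:ℂ) (Complex.I*a) (Complex.I*(b:ℂ)*t) x
  have hfun : (fun x' : ℝ => (c:ℂ) * Complex.exp ((Complex.I*a) * x' + Complex.I*b*t))
      = fun x' => seed c a b (x', t) := by
    funext x'; unfold seed; congr 1; push_cast; ring
  rw [hfun] at h
  convert h using 1
  unfold seed; congr 2; push_cast; ring

lemma seed_hasDerivAt_t (c a b x t : ℝ) :
    HasDerivAt (fun t' => seed c a b (x, t')) (Complex.I * b * seed c a b (x, t)) t := by
  have h := hasDerivAt_mul_cexp (c:ℂ) (Complex.I*b) (Complex.I*(a:ℂ)*x) t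
  have hfun : (fun t' : ℝ => (c:ℂ) * Complex.exp ((Complex.I*b) * t' + Complex.I*a*x))
      = fun t' => seed c a b (x, t') := by
    funext t'; unfold seed; congr 1; push_cast; ring
  rw [hfun] at h
  convert h using 1
  unfold seed; congr 2; push_cast; ring

lemma conj_seed (c a b : ℝ) (p : ℝ × ℝ) :
    (starRingEnd ℂ) (seed c a b p)
      = (c:ℂ) * Complex.exp (-(Complex.I * ((a:ℂ) * p.1 + (b:ℂ) * p.2))) := by
  simp [seed, ← Complex.exp_conj, _root_.map_mul, map_add, Complex.conj_ofReal]

lemma conj_seed_hasDerivAt_x (c a b t x : ℝ) :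
    HasDerivAt (fun x' => (starRingEnd ℂ) (seed c a b (x', t)))
      (-(Complex.I * a) * (starRingEnd ℂ) (seed c a b (x, t))) x := by
  have h := hasDerivAt_mul_cexp (c:ℂ) (-(Complex.I*a)) (-(Complex.I*(b:ℂ)*t)) x
  have hfun : (fun x' : ℝ => (c:ℂ) * Complex.exp (-(Complex.I*a) * x' + -(Complex.I*b*t)))
      = fun x' => (starRingEnd ℂ) (seed c a b (x', t)) := by
    funext x'; rw [conj_seed]; congr 1; push_cast; ring
  rw [hfun] at h
  convert h using 1
  rw [conj_seed]; push_cast; ring_nf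

lemma conj_seed_hasDerivAt_t (c a b x t : ℝ) :
    HasDerivAt (fun t' => (starRingEnd ℂ) (seed c a b (x, t')))
      (-(Complex.I * b) * (starRingEnd ℂ) (seed c a b (x, t))) t := by
  have h := hasDerivAt_mul_cexp (c:ℂ) (-(Complex.I*b)) (-(Complex.I*(a:ℂ)*x)) t
  have hfun : (fun t' : ℝ => (c:ℂ) * Complex.exp (-(Complex.I*b) * t' + -(Complex.I*a*x)))
      = fun t' => (starRingEnd ℂ) (seed c a b (x, t')) := by
    funext t'; rw [conj_seed]; congr 1; push_cast; ring
  rw [hfun] at h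
  convert h using 1
  rw [conj_seed]; push_cast; ring_nf

lemma Qx_eval (c1 c2 a b : ℝ) (p : ℝ × ℝ) :
    Qxmat (seed c1 a b) (seed c2 a b) p =
    !![0, Complex.I*a*seed c1 a b p, Complex.I*a*seed c2 a b p;
       Complex.I*a*(starRingEnd ℂ) (seed c1 a b p), 0, 0;
       Complex.I*a*(starRingEnd ℂ) (seed c2 a b p), 0, 0] := by
  obtain ⟨x, t⟩ := p
  have h2 : ∀ h : 2 < 3, (⟨2, h⟩ : Fin 3) = 2 := fun _ => rfl
  ext i j
  fin_cases i <;> fin_cases j <;>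
    simp only [Qxmat, Qmat, Matrix.of_apply, Fin.mk_zero, Fin.mk_one, h2,
      Matrix.cons_val', Matrix.cons_val_zero,
      Matrix.cons_val_one, Matrix.head_cons, Matrix.empty_val', Matrix.cons_val_fin_one,
      Matrix.head_fin_const, Fin.isValue, Matrix.cons_val_two, Matrix.tail_cons, deriv_const']
  · exact (seed_hasDerivAt_x c1 a b t x).deriv
  · exact (seed_hasDerivAt_x c2 a b t x).deriv
  · have := ((conj_seed_hasDerivAt_x c1 a b t x).neg).deriv
    simpa [neg_mul] using this
  · have := ((conj_seed_hasDerivAt_x c2 a b t x).neg).deriv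
    simpa [neg_mul] using this

lemma rp_hasDerivAt_x (a b t x : ℝ) :
    HasDerivAt (fun x' : ℝ => Complex.exp (Complex.I * ((a:ℂ) * x' + (b:ℂ) * t) / 2))
      (Complex.I * a / 2 * Complex.exp (Complex.I * ((a:ℂ) * x + (b:ℂ) * t) / 2)) x := by
  have h := hasDerivAt_cexp_aff (Complex.I*a/2) (Complex.I*(b:ℂ)*t/2) x
  have hfun : (fun x' : ℝ => Complex.exp (Complex.I*a/2 * x' + Complex.I*(b:ℂ)*t/2))
      = fun x' : ℝ => Complex.exp (Complex.I * ((a:ℂ) * x' + (b:ℂ) * t) / 2) := by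
    funext x'; congr 1; ring
  rw [hfun] at h
  convert h using 2; ring

lemma rm_hasDerivAt_x (a b t x : ℝ) :
    HasDerivAt (fun x' : ℝ => Complex.exp (-(Complex.I * ((a:ℂ) * x' + (b:ℂ) * t)) / 2))
      (-(Complex.I * a) / 2 * Complex.exp (-(Complex.I * ((a:ℂ) * x + (b:ℂ) * t)) / 2)) x := by
  have h := hasDerivAt_cexp_aff (-(Complex.I*a)/2) (-(Complex.I*(b:ℂ)*t)/2) x
  have hfun : (fun x' : ℝ => Complex.exp (-(Complex.I*a)/2 * x' + -(Complex.I*(b:ℂ)*t)/2))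
      = fun x' : ℝ => Complex.exp (-(Complex.I * ((a:ℂ) * x' + (b:ℂ) * t)) / 2) := by
    funext x'; congr 1; ring
  rw [hfun] at h
  convert h using 2; ring

lemma rp_hasDerivAt_t (a b x t : ℝ) :
    HasDerivAt (fun t' : ℝ => Complex.exp (Complex.I * ((a:ℂ) * x + (b:ℂ) * t') / 2))
      (Complex.I * b / 2 * Complex.exp (Complex.I * ((a:ℂ) * x + (b:ℂ) * t) / 2)) t := by
  have h := hasDerivAt_cexp_aff (Complex.I*b/2) (Complex.I*(a:ℂ)*x/2) t
  have hfun : (fun t' : ℝ => Complex.exp (Complex.I*b/2 * t' + Complex.I*(a:ℂ)*x/2))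
      = fun t' : ℝ => Complex.exp (Complex.I * ((a:ℂ) * x + (b:ℂ) * t') / 2) := by
    funext t'; congr 1; ring
  rw [hfun] at h
  convert h using 2; ring

lemma rm_hasDerivAt_t (a b x t : ℝ) :
    HasDerivAt (fun t' : ℝ => Complex.exp (-(Complex.I * ((a:ℂ) * x + (b:ℂ) * t')) / 2))
      (-(Complex.I * b) / 2 * Complex.exp (-(Complex.I * ((a:ℂ) * x + (b:ℂ) * t)) / 2)) t := by
  have h := hasDerivAt_cexp_aff (-(Complex.I*b)/2) (-(Complex.I*(a:ℂ)*x)/2) t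
  have hfun : (fun t' : ℝ => Complex.exp (-(Complex.I*b)/2 * t' + -(Complex.I*(a:ℂ)*x)/2))
      = fun t' : ℝ => Complex.exp (-(Complex.I * ((a:ℂ) * x + (b:ℂ) * t')) / 2) := by
    funext t'; congr 1; ring
  rw [hfun] at h
  convert h using 2; ring

set_option maxHeartbeats 1000000 in
/-- if `Φ` is differentiable and solves the constant-coefficient system
`∂Φ/∂x = Ω·Φ`, `∂Φ/∂t = Λ·Φ`, then `Ψ := R·Φ` solves the Lax pair
`∂Ψ/∂x = U(λ)·Ψ`, `∂Ψ/∂t = V(λ)·Ψ` of the Manakov system for the plane-wave seed. -/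
theorem gauge_transform_solves_lax_pair (a b c1 c2 : ℝ) (lam : ℂ)
    (Φ : ℝ × ℝ → Fin 3 → ℂ) (hΦ : Differentiable ℝ Φ)
    (hx : ∀ x t : ℝ,
      (fun i => deriv (fun x' => Φ (x', t) i) x) = OmegaMat a c1 c2 lam *ᵥ Φ (x, t))
    (ht : ∀ x t : ℝ,
      (fun i => deriv (fun t' => Φ (x, t') i) t) = LambdaMat a b c1 c2 lam *ᵥ Φ (x, t)) :
    ∀ x t : ℝ, ∀ i : Fin 3,
      deriv (fun x' => (Rmat a b (x', t) *ᵥ Φ (x', t)) i) x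
        = (Umat (seed c1 a b) (seed c2 a b) lam (x, t) *ᵥ (Rmat a b (x, t) *ᵥ Φ (x, t))) i ∧
      deriv (fun t' => (Rmat a b (x, t') *ᵥ Φ (x, t')) i) t
        = (Vmat (seed c1 a b) (seed c2 a b) lam (x, t) *ᵥ (Rmat a b (x, t) *ᵥ Φ (x, t))) i := by
  intro x t i
  have hPx : ∀ j : Fin 3, HasDerivAt (fun x' => Φ (x', t) j)
      ((OmegaMat a c1 c2 lam *ᵥ Φ (x, t)) j) x := by
    intro j
    have hd : Differentiable ℝ (fun x' : ℝ => Φ (x', t)) :=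
      hΦ.comp (differentiable_id.prodMk (differentiable_const t))
    have h := ((differentiable_pi.mp hd j) x).hasDerivAt
    rwa [congrFun (hx x t) j] at h
  have hPt : ∀ j : Fin 3, HasDerivAt (fun t' => Φ (x, t') j)
      ((LambdaMat a b c1 c2 lam *ᵥ Φ (x, t)) j) t := by
    intro j
    have hd : Differentiable ℝ (fun t' : ℝ => Φ (x, t')) :=
      hΦ.comp ((differentiable_const x).prodMk differentiable_id)
    have h := ((differentiable_pi.mp hd j) t).hasDerivAt
    rwa [congrFun (ht x t) j] at h
  have hE : ∀ c : ℝ, seed c a b (x, t) = (c:ℂ) *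
      (Complex.exp (Complex.I * ((a:ℂ) * x + (b:ℂ) * t) / 2))^2 := by
    intro c
    unfold seed
    rw [sq, ← Complex.exp_add]
    congr 2
    ring
  have hCE : ∀ c : ℝ, (starRingEnd ℂ) (seed c a b (x, t)) = (c:ℂ) *
      ((Complex.exp (Complex.I * ((a:ℂ) * x + (b:ℂ) * t) / 2))^2)⁻¹ := by
    intro c
    rw [conj_seed]
    rw [sq, ← Complex.exp_add, ← Complex.exp_neg]
    congr 2
    ring
  have hG : Complex.exp (-(Complex.I * ((a:ℂ) * x + (b:ℂ) * t)) / 2)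
      = (Complex.exp (Complex.I * ((a:ℂ) * x + (b:ℂ) * t) / 2))⁻¹ := by
    rw [neg_div, Complex.exp_neg]
  have FNE : Complex.exp (Complex.I * ((a:ℂ) * x + (b:ℂ) * t) / 2) ≠ 0 := Complex.exp_ne_zero _
  have h2 : ∀ h : (2:ℕ) < 3, (⟨2, h⟩ : Fin 3) = 2 := fun _ => rfl
  constructor
  · fin_cases i
    · simp only [Fin.zero_eta, Fin.mk_one, h2]
      rw [show (fun x' => (Rmat a b (x', t) *ᵥ Φ (x', t)) 0)
          = fun x' : ℝ => Complex.exp (Complex.I * ((a:ℂ) * x' + (b:ℂ) * t) / 2) * Φ (x', t) 0 from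
        funext fun x' => by simp [Rmat, Matrix.mulVec_diagonal]]
      rw [(((rp_hasDerivAt_x a b t x).mul (hPx 0)) : HasDerivAt (fun x' => _ * _) _ x).deriv]
      simp only [Umat, Qmat, Jmat, Rmat, OmegaMat, Matrix.mulVec, dotProduct,
        Fin.sum_univ_three, Matrix.diagonal, Matrix.of_apply, Matrix.add_apply,
        Matrix.smul_apply, Matrix.cons_val', Matrix.cons_val_zero, Matrix.cons_val_one,
        Matrix.head_cons, Matrix.empty_val', Matrix.cons_val_fin_one, Matrix.head_fin_const,
        Fin.isValue, smul_eq_mul, Matrix.cons_val_two, Matrix.tail_cons,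
        Matrix.diagonal_apply, Fin.reduceEq, if_true, if_false, reduceIte]
      try simp only [hCE c1, hCE c2]
      simp only [hE c1, hE c2, hG]
      field_simp
      ring_nf
      try simp only [Complex.I_sq, Complex.I_mul_I]
      try ring_nf
    · simp only [Fin.zero_eta, Fin.mk_one, h2]
      rw [show (fun x' => (Rmat a b (x', t) *ᵥ Φ (x', t)) 1)
          = fun x' : ℝ => Complex.exp (-(Complex.I * ((a:ℂ) * x' + (b:ℂ) * t)) / 2) * Φ (x', t) 1 from
        funext fun x' => by simp [Rmat, Matrix.mulVec_diagonal]]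
      rw [(((rm_hasDerivAt_x a b t x).mul (hPx 1)) : HasDerivAt (fun x' => _ * _) _ x).deriv]
      simp only [Umat, Qmat, Jmat, Rmat, OmegaMat, Matrix.mulVec, dotProduct,
        Fin.sum_univ_three, Matrix.diagonal, Matrix.of_apply, Matrix.add_apply,
        Matrix.smul_apply, Matrix.cons_val', Matrix.cons_val_zero, Matrix.cons_val_one,
        Matrix.head_cons, Matrix.empty_val', Matrix.cons_val_fin_one, Matrix.head_fin_const,
        Fin.isValue, smul_eq_mul, Matrix.cons_val_two, Matrix.tail_cons,
        Matrix.diagonal_apply, Fin.reduceEq, if_true, if_false, reduceIte]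
      try simp only [hCE c1, hCE c2]
      simp only [hE c1, hE c2, hG]
      field_simp
      ring_nf
      try simp only [Complex.I_sq, Complex.I_mul_I]
      try ring_nf
    · simp only [Fin.zero_eta, Fin.mk_one, h2]
      rw [show (fun x' => (Rmat a b (x', t) *ᵥ Φ (x', t)) 2)
          = fun x' : ℝ => Complex.exp (-(Complex.I * ((a:ℂ) * x' + (b:ℂ) * t)) / 2) * Φ (x', t) 2 from
        funext fun x' => by simp [Rmat, Matrix.mulVec_diagonal]]
      rw [(((rm_hasDerivAt_x a b t x).mul (hPx 2)) : HasDerivAt (fun x' => _ * _) _ x).deriv]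
      simp only [Umat, Qmat, Jmat, Rmat, OmegaMat, Matrix.mulVec, dotProduct,
        Fin.sum_univ_three, Matrix.diagonal, Matrix.of_apply, Matrix.add_apply,
        Matrix.smul_apply, Matrix.cons_val', Matrix.cons_val_zero, Matrix.cons_val_one,
        Matrix.head_cons, Matrix.empty_val', Matrix.cons_val_fin_one, Matrix.head_fin_const,
        Fin.isValue, smul_eq_mul, Matrix.cons_val_two, Matrix.tail_cons,
        Matrix.diagonal_apply, Fin.reduceEq, if_true, if_false, reduceIte]
      try simp only [hCE c1, hCE c2]
      simp only [hE c1, hE c2, hG]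
      field_simp
      ring_nf
      try simp only [Complex.I_sq, Complex.I_mul_I]
      try ring_nf
  · fin_cases i
    · simp only [Fin.zero_eta, Fin.mk_one, h2]
      rw [show (fun t' => (Rmat a b (x, t') *ᵥ Φ (x, t')) 0)
          = fun t' : ℝ => Complex.exp (Complex.I * ((a:ℂ) * x + (b:ℂ) * t') / 2) * Φ (x, t') 0 from
        funext fun t' => by simp [Rmat, Matrix.mulVec_diagonal]]
      rw [(((rp_hasDerivAt_t a b x t).mul (hPt 0)) : HasDerivAt (fun t' => _ * _) _ t).deriv]
      simp only [Vmat, Qmat, Qx_eval, Jmat, Rmat, LambdaMat, Matrix.mul_apply, Matrix.sub_apply, Matrix.mulVec, dotProduct,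
        Fin.sum_univ_three, Matrix.diagonal, Matrix.of_apply, Matrix.add_apply,
        Matrix.smul_apply, Matrix.cons_val', Matrix.cons_val_zero, Matrix.cons_val_one,
        Matrix.head_cons, Matrix.empty_val', Matrix.cons_val_fin_one, Matrix.head_fin_const,
        Fin.isValue, smul_eq_mul, Matrix.cons_val_two, Matrix.tail_cons,
        Matrix.diagonal_apply, Fin.reduceEq, if_true, if_false, reduceIte]
      try simp only [hCE c1, hCE c2]
      simp only [hE c1, hE c2, hG]
      field_simp
      ring_nf
      try simp only [Complex.I_sq, Complex.I_mul_I]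
      try ring_nf
    · simp only [Fin.zero_eta, Fin.mk_one, h2]
      rw [show (fun t' => (Rmat a b (x, t') *ᵥ Φ (x, t')) 1)
          = fun t' : ℝ => Complex.exp (-(Complex.I * ((a:ℂ) * x + (b:ℂ) * t')) / 2) * Φ (x, t') 1 from
        funext fun t' => by simp [Rmat, Matrix.mulVec_diagonal]]
      rw [(((rm_hasDerivAt_t a b x t).mul (hPt 1)) : HasDerivAt (fun t' => _ * _) _ t).deriv]
      simp only [Vmat, Qmat, Qx_eval, Jmat, Rmat, LambdaMat, Matrix.mul_apply, Matrix.sub_apply, Matrix.mulVec, dotProduct,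
        Fin.sum_univ_three, Matrix.diagonal, Matrix.of_apply, Matrix.add_apply,
        Matrix.smul_apply, Matrix.cons_val', Matrix.cons_val_zero, Matrix.cons_val_one,
        Matrix.head_cons, Matrix.empty_val', Matrix.cons_val_fin_one, Matrix.head_fin_const,
        Fin.isValue, smul_eq_mul, Matrix.cons_val_two, Matrix.tail_cons,
        Matrix.diagonal_apply, Fin.reduceEq, if_true, if_false, reduceIte]
      try simp only [hCE c1, hCE c2]
      simp only [hE c1, hE c2, hG]
      field_simp
      ring_nf
      try simp only [Complex.I_sq, Complex.I_mul_I]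
      try ring_nf
    · simp only [Fin.zero_eta, Fin.mk_one, h2]
      rw [show (fun t' => (Rmat a b (x, t') *ᵥ Φ (x, t')) 2)
          = fun t' : ℝ => Complex.exp (-(Complex.I * ((a:ℂ) * x + (b:ℂ) * t')) / 2) * Φ (x, t') 2 from
        funext fun t' => by simp [Rmat, Matrix.mulVec_diagonal]]
      rw [(((rm_hasDerivAt_t a b x t).mul (hPt 2)) : HasDerivAt (fun t' => _ * _) _ t).deriv]
      simp only [Vmat, Qmat, Qx_eval, Jmat, Rmat, LambdaMat, Matrix.mul_apply, Matrix.sub_apply, Matrix.mulVec, dotProduct,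
        Fin.sum_univ_three, Matrix.diagonal, Matrix.of_apply, Matrix.add_apply,
        Matrix.smul_apply, Matrix.cons_val', Matrix.cons_val_zero, Matrix.cons_val_one,
        Matrix.head_cons, Matrix.empty_val', Matrix.cons_val_fin_one, Matrix.head_fin_const,
        Fin.isValue, smul_eq_mul, Matrix.cons_val_two, Matrix.tail_cons,
        Matrix.diagonal_apply, Fin.reduceEq, if_true, if_false, reduceIte]
      try simp only [hCE c1, hCE c2]
      simp only [hE c1, hE c2, hG]
      field_simp
      ring_nf
      try simp only [Complex.I_sq, Complex.I_mul_I]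
      try ring_nf
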